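/- Let α ∈ (0,1), γ > 0, and v, c′ ∈ ℝ. For each n ≥ 1 let L_{n,1}, …, L_{n,n} and L′_{n,1}, …, L′_{n,n} be real numbers, let F̂_n(y) = (1/n)·#{i : L_{n,i} ≤ y} be the empirical CDF of row n, and let (v̂_n) be a sequence of reals. Assume: (i) (1/n)·∑_{i=1}^n |L′_{n,i}|^{1+γ} converges to a finite limit; (ii) (1/(n(1−α)))·∑_{i=1}^n L′_{n,i}·1{L_{n,i} > v} → c′; (iii) F̂_n(v̂_n) − F̂_n(v) → 0. Then (1/(n(1−α)))·∑_{i=1}^n L′_{n,i}·1{L_{n,i} > v̂_n} → c′. -/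

import Mathlib

open Filter

/-- Deterministic convergence argument for the IPA CVaR sensitivity estimator:
if the averages `(1/n)·∑ |L′_{n,i}|^{1+γ}` converge to a finite limit, the
estimator at the true threshold `v` converges to `c′`, and
`F̂_n(v̂_n) − F̂_n(v) → 0`, then the estimator at the estimated thresholds
`v̂_n` also converges to `c′`. -/
theorem stmt_8 (α γ v c' : ℝ) (hα : α ∈ Set.Ioo (0:ℝ) 1) (hγ : 0 < γ)
    (L L' : ℕ → ℕ → ℝ) (vhat : ℕ → ℝ)
    (Fhat : ℕ → ℝ → ℝ)
    (hF : ∀ n : ℕ, ∀ y : ℝ,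
      Fhat n y = (((Finset.range n).filter (fun i => L n i ≤ y)).card : ℝ) / n)
    (D : ℝ)
    (hD : Tendsto (fun n : ℕ => (1 / (n : ℝ)) * ∑ i ∈ Finset.range n, |L' n i| ^ (1 + γ))
      atTop (nhds D))
    (hmu : Tendsto (fun n : ℕ => (1 / ((n : ℝ) * (1 - α))) *
        ∑ i ∈ Finset.range n, L' n i * (if v < L n i then (1:ℝ) else 0))
      atTop (nhds c'))
    (hFF : Tendsto (fun n : ℕ => Fhat n (vhat n) - Fhat n v) atTop (nhds 0)) :
    Tendsto (fun n : ℕ => (1 / ((n : ℝ) * (1 - α))) *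
        ∑ i ∈ Finset.range n, L' n i * (if vhat n < L n i then (1:ℝ) else 0))
      atTop (nhds c') := by
  obtain ⟨hα0, hα1⟩ := hα
  have h1α : (0:ℝ) < 1 - α := by linarith
  set K : ℝ := 1 / (1 - α) with hK
  have hK0 : 0 < K := by positivity
  -- notation
  set S : ℕ → ℝ := fun n => ∑ i ∈ Finset.range n,
    |(if vhat n < L n i then (1:ℝ) else 0) - (if v < L n i then (1:ℝ) else 0)| with hS
  set T : ℕ → ℝ := fun n => ∑ i ∈ Finset.range n, |L' n i| ^ (1 + γ) with hT
  -- counting identity : for a ≤ b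
  have hsumd : ∀ n : ℕ, ∀ a b : ℝ, a ≤ b →
      ∑ i ∈ Finset.range n,
        |(if a < L n i then (1:ℝ) else 0) - (if b < L n i then (1:ℝ) else 0)|
      = (((Finset.range n).filter (fun i => L n i ≤ b)).card : ℝ)
        - (((Finset.range n).filter (fun i => L n i ≤ a)).card : ℝ) := by
    intro n a b hab
    have h1 : ∀ i ∈ Finset.range n,
        |(if a < L n i then (1:ℝ) else 0) - (if b < L n i then (1:ℝ) else 0)|
        = (if L n i ≤ b then (1:ℝ) else 0) - (if L n i ≤ a then (1:ℝ) else 0) := by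
      intro i _
      rcases le_or_gt (L n i) a with h | h
      · simp [not_lt.2 h, not_lt.2 (h.trans hab), h, h.trans hab]
      rcases le_or_gt (L n i) b with h2 | h2
      · simp [h, h2, not_lt.2 h2, not_le.2 h]
      · simp [h, h2, not_le.2 h2, not_le.2 h]
    rw [Finset.sum_congr rfl h1, Finset.sum_sub_distrib, Finset.sum_boole, Finset.sum_boole]
  have hcardmono : ∀ n : ℕ, ∀ a b : ℝ, a ≤ b →
      ((Finset.range n).filter (fun i => L n i ≤ a)).card
        ≤ ((Finset.range n).filter (fun i => L n i ≤ b)).card := by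
    intro n a b hab
    exact Finset.card_le_card (Finset.monotone_filter_right _ (fun i _ h => le_trans h hab))
  have hSabs : ∀ n : ℕ, S n
      = |(((Finset.range n).filter (fun i => L n i ≤ vhat n)).card : ℝ)
        - (((Finset.range n).filter (fun i => L n i ≤ v)).card : ℝ)| := by
    intro n
    rcases le_total (vhat n) v with hab | hab
    · rw [hS]
      simp only
      rw [hsumd n _ _ hab, abs_sub_comm, abs_of_nonneg]
      have := hcardmono n _ _ hab
      have : (((Finset.range n).filter (fun i => L n i ≤ vhat n)).card : ℝ)
          ≤ (((Finset.range n).filter (fun i => L n i ≤ v)).card : ℝ) := by exact_mod_cast this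
      linarith
    · rw [hS]
      simp only
      have hcomm : ∀ i ∈ Finset.range n,
          |(if vhat n < L n i then (1:ℝ) else 0) - (if v < L n i then (1:ℝ) else 0)|
          = |(if v < L n i then (1:ℝ) else 0) - (if vhat n < L n i then (1:ℝ) else 0)| := by
        intro i _; exact abs_sub_comm _ _
      rw [Finset.sum_congr rfl hcomm, hsumd n _ _ hab, abs_of_nonneg]
      have := hcardmono n _ _ hab
      have : (((Finset.range n).filter (fun i => L n i ≤ v)).card : ℝ)
          ≤ (((Finset.range n).filter (fun i => L n i ≤ vhat n)).card : ℝ) := by exact_mod_cast this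
      linarith
  -- A n := (1/n) * S n equals |Fhat n (vhat n) - Fhat n v|
  have hA : Tendsto (fun n : ℕ => (1 / (n : ℝ)) * S n) atTop (nhds 0) := by
    have heq : ∀ n : ℕ, (1 / (n : ℝ)) * S n = |Fhat n (vhat n) - Fhat n v| := by
      intro n
      rw [hSabs n, hF n, hF n, div_sub_div_same, abs_div, Nat.abs_cast, one_div,
        inv_mul_eq_div]
    have := hFF.abs
    rw [abs_zero] at this
    exact this.congr fun n => (heq n).symm
  have hT0 : ∀ n, 0 ≤ T n := fun n =>
    Finset.sum_nonneg fun i _ => Real.rpow_nonneg (abs_nonneg _) _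
  have hD0 : 0 ≤ D :=
    ge_of_tendsto' hD fun n => by positivity
  -- the difference of estimators tends to 0
  have key : Tendsto (fun n : ℕ => (1 / ((n : ℝ) * (1 - α))) *
      ∑ i ∈ Finset.range n, L' n i * (if vhat n < L n i then (1:ℝ) else 0)
      - (1 / ((n : ℝ) * (1 - α))) *
      ∑ i ∈ Finset.range n, L' n i * (if v < L n i then (1:ℝ) else 0)) atTop (nhds 0) := by
    rw [NormedAddCommGroup.tendsto_nhds_zero]
    intro ε hε
    -- choose M
    have htM : Tendsto (fun M : ℝ => K * D / M ^ γ) atTop (nhds 0) :=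
      tendsto_const_nhds.div_atTop (tendsto_rpow_atTop hγ)
    obtain ⟨M, hM1, hM0⟩ :=
      ((htM.eventually (gt_mem_nhds (half_pos hε))).and (eventually_gt_atTop 0)).exists
    -- pointwise bound
    have hterm : ∀ n i, |L' n i| *
        |(if vhat n < L n i then (1:ℝ) else 0) - (if v < L n i then (1:ℝ) else 0)|
        ≤ M * |(if vhat n < L n i then (1:ℝ) else 0) - (if v < L n i then (1:ℝ) else 0)|
          + |L' n i| ^ (1 + γ) / M ^ γ := by
      intro n i
      set d := |(if vhat n < L n i then (1:ℝ) else 0) - (if v < L n i then (1:ℝ) else 0)| with hd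
      have hrnn : (0:ℝ) ≤ |L' n i| ^ (1 + γ) / M ^ γ :=
        div_nonneg (Real.rpow_nonneg (abs_nonneg _) _) (Real.rpow_nonneg hM0.le _)
      have hdcases : d = 0 ∨ d = 1 := by
        rw [hd]; split_ifs <;> simp
      rcases hdcases with h | h
      · rw [h]; simpa using hrnn
      · rw [h, mul_one, mul_one]
        rcases le_or_gt (|L' n i|) M with hle | hlt
        · linarith
        · have hx : (0:ℝ) < |L' n i| := hM0.trans hlt
          have h1 : |L' n i| ^ (1 + γ) = |L' n i| * |L' n i| ^ γ := by
            rw [Real.rpow_add hx, Real.rpow_one]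
          have h2 : M ^ γ ≤ |L' n i| ^ γ :=
            Real.rpow_le_rpow hM0.le hlt.le hγ.le
          have h3 : |L' n i| * M ^ γ ≤ |L' n i| ^ (1 + γ) := by
            rw [h1]; exact mul_le_mul_of_nonneg_left h2 (abs_nonneg _)
          have hMγ : (0:ℝ) < M ^ γ := Real.rpow_pos_of_pos hM0 _
          have h4 : |L' n i| ≤ |L' n i| ^ (1 + γ) / M ^ γ := by
            rw [le_div_iff₀ hMγ]; exact h3
          linarith
    -- main bound
    have hbound : ∀ n : ℕ,
        ‖(1 / ((n : ℝ) * (1 - α))) *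
          ∑ i ∈ Finset.range n, L' n i * (if vhat n < L n i then (1:ℝ) else 0)
          - (1 / ((n : ℝ) * (1 - α))) *
          ∑ i ∈ Finset.range n, L' n i * (if v < L n i then (1:ℝ) else 0)‖
        ≤ K * (M * ((1 / (n : ℝ)) * S n) + (1 / M ^ γ) * ((1 / (n : ℝ)) * T n)) := by
      intro n
      have hfac : (1:ℝ) / ((n : ℝ) * (1 - α)) = K * (1 / (n : ℝ)) := by
        rw [hK]; rw [one_div, one_div, one_div, mul_inv]; ring
      rw [← mul_sub, ← Finset.sum_sub_distrib]
      have hstep : ∀ i ∈ Finset.range n,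
          |L' n i * (if vhat n < L n i then (1:ℝ) else 0)
            - L' n i * (if v < L n i then (1:ℝ) else 0)|
          ≤ M * |(if vhat n < L n i then (1:ℝ) else 0) - (if v < L n i then (1:ℝ) else 0)|
            + |L' n i| ^ (1 + γ) / M ^ γ := by
        intro i _
        rw [← mul_sub, abs_mul]
        exact hterm n i
      have habs : |∑ i ∈ Finset.range n, (L' n i * (if vhat n < L n i then (1:ℝ) else 0)
            - L' n i * (if v < L n i then (1:ℝ) else 0))|
          ≤ ∑ i ∈ Finset.range n,
            (M * |(if vhat n < L n i then (1:ℝ) else 0) - (if v < L n i then (1:ℝ) else 0)|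
              + |L' n i| ^ (1 + γ) / M ^ γ) :=
        (Finset.abs_sum_le_sum_abs _ _).trans (Finset.sum_le_sum hstep)
      rw [Real.norm_eq_abs, abs_mul, hfac]
      have hnn : (0:ℝ) ≤ K * (1 / (n : ℝ)) := by positivity
      have habsK : |K * (1 / (n:ℝ))| = K * (1 / (n:ℝ)) := abs_of_nonneg hnn
      rw [habsK]
      calc K * (1 / (n:ℝ)) * |∑ i ∈ Finset.range n, (L' n i * (if vhat n < L n i then (1:ℝ) else 0)
            - L' n i * (if v < L n i then (1:ℝ) else 0))|
          ≤ K * (1 / (n:ℝ)) * ∑ i ∈ Finset.range n,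
            (M * |(if vhat n < L n i then (1:ℝ) else 0) - (if v < L n i then (1:ℝ) else 0)|
              + |L' n i| ^ (1 + γ) / M ^ γ) := by
            exact mul_le_mul_of_nonneg_left habs hnn
        _ = K * (M * ((1 / (n : ℝ)) * S n) + (1 / M ^ γ) * ((1 / (n : ℝ)) * T n)) := by
            rw [Finset.sum_add_distrib, ← Finset.mul_sum, ← Finset.sum_div, hS, hT]
            simp only
            ring
    -- the bound tends to K*D/M^γ < ε
    have hbt : Tendsto (fun n : ℕ =>
        K * (M * ((1 / (n : ℝ)) * S n) + (1 / M ^ γ) * ((1 / (n : ℝ)) * T n)))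
        atTop (nhds (K * (M * 0 + (1 / M ^ γ) * D))) :=
      (((hA.const_mul M).add (hD.const_mul (1 / M ^ γ))).const_mul K)
    have hlim : K * (M * 0 + (1 / M ^ γ) * D) = K * D / M ^ γ := by ring
    rw [hlim] at hbt
    have hev := hbt.eventually (gt_mem_nhds (show K * D / M ^ γ < ε by linarith))
    exact hev.mono fun n hn => lt_of_le_of_lt (hbound n) hn
  have := hmu.add key
  rw [add_zero] at this
  exact this.congr fun n => by ring
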